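/- In any inner product space X, any two maximal orthonormal systems have the same cardinality. -/
import Mathlib


noncomputable section
open scoped InnerProductSpace ENNReal

/-- An orthonormal subset of an inner product space. -/
def OrthSet (k : Type*) {E : Type*} [RCLike k] [NormedAddCommGroup E]
    [InnerProductSpace k E] (B : Set E) : Prop :=
  Orthonormal k ((↑) : B → E)

/-- A maximal orthonormal system of the whole space. -/
def MaximalOrthSet (k : Type*) {E : Type*} [RCLike k] [NormedAddCommGroup E]
    [InnerProductSpace k E] (B : Set E) : Prop :=
  OrthSet k B ∧ ∀ C : Set E, B ⊆ C → OrthSet k C → C = B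

/-- An orthonormal basis (as a set): an orthonormal system whose linear span is dense. -/
def IsOrthBasisSet (k : Type*) {E : Type*} [RCLike k] [NormedAddCommGroup E]
    [InnerProductSpace k E] (B : Set E) : Prop :=
  OrthSet k B ∧ Dense (Submodule.span k B : Set E)

/-- The space has an orthonormal basis (is non-pathological). -/
def HasOrthBasis (k E : Type*) [RCLike k] [NormedAddCommGroup E]
    [InnerProductSpace k E] : Prop :=
  ∃ B : Set E, IsOrthBasisSet k B

/-- Density: least cardinality of a dense subset. -/
def densityCard (E : Type*) [TopologicalSpace E] : Cardinal :=
  sInf { c | ∃ D : Set E, Dense D ∧ Cardinal.mk D = c }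


section Aux
variable {k : Type*} [RCLike k] {E : Type*} [NormedAddCommGroup E] [InnerProductSpace k E]

/-- Maximality gives trivial orthogonal complement of the span. -/
lemma maximal_bot {B : Set E} (hB : MaximalOrthSet k B) :
    (Submodule.span k B)ᗮ = ⊥ :=
  (maximal_orthonormal_iff_orthogonalComplement_eq_bot hB.1).mp
    (fun u hu h => hB.2 u hu h)

/-- If the span of a maximal orthonormal set is complete, its cardinality is the rank. -/
lemma card_eq_rank {B : Set E} (hB : MaximalOrthSet k B)
    [CompleteSpace (Submodule.span k B)] :
    Cardinal.mk B = Module.rank k E := by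
  have hspan : Submodule.span k B = ⊤ :=
    Submodule.orthogonal_eq_bot_iff.mp (maximal_bot hB)
  have hli := hB.1.linearIndependent
  have htop : ⊤ ≤ Submodule.span k (Set.range ((↑) : B → E)) := by
    rw [Subtype.range_coe, hspan]
  exact (Module.Basis.mk hli htop).mk_eq_rank''

/-- Infinite case inequality. -/
lemma card_le_card {B C : Set E} (hB : MaximalOrthSet k B) (hC : MaximalOrthSet k C)
    (hCinf : C.Infinite) : Cardinal.mk B ≤ Cardinal.mk C := by
  have hCbot := maximal_bot hC
  set S : C → Set B := fun c => {b : B | ⟪(c : E), (b : E)⟫_k ≠ 0} with hS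
  have hcover : ∀ b : B, ∃ c : C, b ∈ S c := by
    intro b
    by_contra h
    push_neg at h
    have hmem : (b : E) ∈ (Submodule.span k C)ᗮ := by
      rw [Submodule.mem_orthogonal]
      intro u hu
      induction hu using Submodule.span_induction with
      | mem x hx =>
          have := h ⟨x, hx⟩
          simpa [S] using this
      | zero => simp
      | add x y _ _ hx hy => simp [inner_add_left, hx, hy]
      | smul a x _ hx => simp [inner_smul_left, hx]
    rw [hCbot, Submodule.mem_bot] at hmem
    have hb1 : ‖(b : E)‖ = 1 := hB.1.1 b
    rw [hmem] at hb1
    simp at hb1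
  have hcount : ∀ c : C, (S c).Countable := by
    intro c
    have hsum : Summable fun b : B => ‖⟪(b : E), (c : E)⟫_k‖ ^ 2 :=
      hB.1.inner_products_summable _
    have := hsum.countable_support
    refine Set.Countable.mono ?_ this
    intro b hb
    simp only [Function.mem_support]
    simp only [S, Set.mem_setOf_eq] at hb
    rw [ne_eq, inner_eq_zero_symm] at hb
    simpa using hb
  have hunion : (⋃ c : C, S c) = Set.univ := by
    ext b
    simp only [Set.mem_iUnion, Set.mem_univ, iff_true]
    exact hcover b
  calc Cardinal.mk B = Cardinal.mk (⋃ c : C, S c) := by rw [hunion, Cardinal.mk_univ]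
    _ ≤ Cardinal.sum fun c : C => Cardinal.mk (S c) := Cardinal.mk_iUnion_le_sum_mk
    _ ≤ Cardinal.sum fun _ : C => Cardinal.aleph0 :=
        Cardinal.sum_le_sum _ _ fun c => (hcount c).le_aleph0
    _ = Cardinal.mk C * Cardinal.aleph0 := Cardinal.sum_const' _ _
    _ = Cardinal.mk C := by
        have hinf : Cardinal.aleph0 ≤ Cardinal.mk C := Cardinal.infinite_iff.mp hCinf.to_subtype
        exact Cardinal.mul_eq_left hinf hinf Cardinal.aleph0_ne_zero

end Aux

/-- any two maximal orthonormal systems have the same cardinality. -/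
theorem stmt2 {k : Type*} [RCLike k] {E : Type*} [NormedAddCommGroup E]
    [InnerProductSpace k E] (B C : Set E)
    (hB : MaximalOrthSet k B) (hC : MaximalOrthSet k C) :
    Cardinal.mk B = Cardinal.mk C := by
  have key : ∀ B C : Set E, MaximalOrthSet k B → MaximalOrthSet k C → B.Finite →
      Cardinal.mk B = Cardinal.mk C := by
    intro B C hB hC hBf
    haveI : FiniteDimensional k (Submodule.span k B) :=
      FiniteDimensional.span_of_finite k hBf
    haveI : CompleteSpace (Submodule.span k B) := FiniteDimensional.complete k _
    have hspan : Submodule.span k B = ⊤ :=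
      Submodule.orthogonal_eq_bot_iff.mp (maximal_bot hB)
    haveI : FiniteDimensional k E :=
      Module.Finite.equiv (LinearEquiv.ofTop _ hspan)
    haveI : CompleteSpace (Submodule.span k C) := FiniteDimensional.complete k _
    rw [card_eq_rank hB, card_eq_rank hC]
  by_cases hBf : B.Finite
  · exact key B C hB hC hBf
  · by_cases hCf : C.Finite
    · exact (key C B hC hB hCf).symm
    · exact le_antisymm (card_le_card hB hC hCf)
        (card_le_card hC hB hBf)
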